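/- The strong rainbow connection number of C_7 □ C_2 equals 4. -/
import Mathlib


open SimpleGraph Finset

/-- A coloring `c` of (potential) edges is a rainbow coloring of `G` if every pair of
distinct vertices is joined by a path whose edges have pairwise distinct colors. -/
def SimpleGraph.IsRainbowColoring {V α : Type*} (G : SimpleGraph V) (c : Sym2 V → α) : Prop :=
  ∀ u v : V, u ≠ v → ∃ p : G.Walk u v, p.IsPath ∧ (p.edges.map c).Nodup

/-- A strong rainbow coloring: every pair of distinct vertices is joined by a rainbow
path whose length equals the distance between them. -/
def SimpleGraph.IsStrongRainbowColoring {V α : Type*} (G : SimpleGraph V) (c : Sym2 V → α) : Prop :=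
  ∀ u v : V, u ≠ v → ∃ p : G.Walk u v, p.IsPath ∧ p.length = G.dist u v ∧ (p.edges.map c).Nodup

/-- The rainbow connection number: least number of colors of a rainbow coloring. -/
noncomputable def SimpleGraph.rc {V : Type*} (G : SimpleGraph V) : ℕ :=
  sInf {k : ℕ | ∃ c : Sym2 V → Fin k, G.IsRainbowColoring c}

/-- The strong rainbow connection number: least number of colors of a strong rainbow coloring. -/
noncomputable def SimpleGraph.src {V : Type*} (G : SimpleGraph V) : ℕ :=
  sInf {k : ℕ | ∃ c : Sym2 V → Fin k, G.IsStrongRainbowColoring c}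

/-- The toroidal mesh `C_{n 0} □ ⋯ □ C_{n (r-1)}`: the Cartesian (box) product of the
cycles `cycleGraph (n i)`. -/
def toroidalMesh {r : ℕ} (n : Fin r → ℕ) : SimpleGraph (∀ i, Fin (n i)) :=
  SimpleGraph.fromRel fun u v =>
    ∃ i, (cycleGraph (n i)).Adj (u i) (v i) ∧ ∀ j, j ≠ i → u j = v j

/-! ### Auxiliary definitions for `stmt_18` -/

namespace Stmt18Aux

instance : DecidableRel (cycleGraph 7 □ cycleGraph 2).Adj := fun _ _ =>
  decidable_of_iff _ (SimpleGraph.boxProd_adj).symm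

/-- Combinatorial distance on the 7-prism. -/
def dd (u v : Fin 7 × Fin 2) : ℕ :=
  min (u.1 - v.1).val (v.1 - u.1).val + (if u.2 = v.2 then 0 else 1)

def cyc : Fin 2 → Fin 7 → Fin 4 := ![![0,1,2,0,3,1,2], ![3,1,2,0,1,2,0]]
def spk : Fin 7 → Fin 4 := ![3,3,3,0,3,3,3]

def col (u v : Fin 7 × Fin 2) : Fin 4 :=
  if u.2 = v.2 then
    (if v.1 = u.1 + 1 then cyc u.2 u.1 else if u.1 = v.1 + 1 then cyc u.2 v.1 else 0)
  else if u.1 = v.1 then spk u.1 else 0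

lemma col_symm : ∀ u v, col u v = col v u := by decide

/-- The strong rainbow 4-coloring. -/
def cfun : Sym2 (Fin 7 × Fin 2) → Fin 4 := Sym2.lift ⟨col, col_symm⟩

/-- Table of (tails of) chosen shortest rainbow paths. -/
def tbl : Fin 7 → Fin 2 → Fin 7 → Fin 2 → List (Fin 7 × Fin 2) :=
  ![
  ![
    ![
      ![[], [(0,1)]],
      ![[(1,0)], [(1,0), (1,1)]],
      ![[(1,0), (2,0)], [(1,0), (1,1), (2,1)]],
      ![[(1,0), (2,0), (3,0)], [(1,0), (1,1), (2,1), (3,1)]],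
      ![[(6,0), (5,0), (4,0)], [(0,1), (6,1), (5,1), (4,1)]],
      ![[(6,0), (5,0)], [(0,1), (6,1), (5,1)]],
      ![[(6,0)], [(0,1), (6,1)]]],
    ![
      ![[(0,0)], []],
      ![[(0,0), (1,0)], [(1,1)]],
      ![[(0,0), (1,0), (2,0)], [(1,1), (2,1)]],
      ![[(0,0), (1,0), (2,0), (3,0)], [(1,1), (2,1), (3,1)]],
      ![[(6,1), (5,1), (4,1), (4,0)], [(6,1), (5,1), (4,1)]],
      ![[(0,0), (6,0), (5,0)], [(6,1), (5,1)]],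
      ![[(0,0), (6,0)], [(6,1)]]]],
  ![
    ![
      ![[(0,0)], [(0,0), (0,1)]],
      ![[], [(1,1)]],
      ![[(2,0)], [(1,1), (2,1)]],
      ![[(2,0), (3,0)], [(1,1), (2,1), (3,1)]],
      ![[(2,0), (3,0), (4,0)], [(1,1), (2,1), (3,1), (4,1)]],
      ![[(0,0), (6,0), (5,0)], [(0,0), (6,0), (5,0), (5,1)]],
      ![[(0,0), (6,0)], [(0,0), (6,0), (6,1)]]],
    ![
      ![[(1,0), (0,0)], [(0,1)]],
      ![[(1,0)], []],
      ![[(1,0), (2,0)], [(2,1)]],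
      ![[(1,0), (2,0), (3,0)], [(2,1), (3,1)]],
      ![[(1,0), (2,0), (3,0), (4,0)], [(2,1), (3,1), (4,1)]],
      ![[(1,0), (0,0), (6,0), (5,0)], [(0,1), (6,1), (5,1)]],
      ![[(1,0), (0,0), (6,0)], [(0,1), (6,1)]]]],
  ![
    ![
      ![[(1,0), (0,0)], [(1,0), (0,0), (0,1)]],
      ![[(1,0)], [(1,0), (1,1)]],
      ![[], [(2,1)]],
      ![[(3,0)], [(2,1), (3,1)]],
      ![[(3,0), (4,0)], [(2,1), (3,1), (4,1)]],
      ![[(3,0), (4,0), (5,0)], [(2,1), (3,1), (4,1), (5,1)]],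
      ![[(1,0), (0,0), (6,0)], [(1,0), (0,0), (6,0), (6,1)]]],
    ![
      ![[(1,1), (1,0), (0,0)], [(1,1), (0,1)]],
      ![[(1,1), (1,0)], [(1,1)]],
      ![[(2,0)], []],
      ![[(2,0), (3,0)], [(3,1)]],
      ![[(2,0), (3,0), (4,0)], [(3,1), (4,1)]],
      ![[(3,1), (4,1), (5,1), (5,0)], [(3,1), (4,1), (5,1)]],
      ![[(1,1), (1,0), (0,0), (6,0)], [(1,1), (0,1), (6,1)]]]],
  ![
    ![
      ![[(2,0), (1,0), (0,0)], [(2,0), (1,0), (0,0), (0,1)]],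
      ![[(2,0), (1,0)], [(2,0), (1,0), (1,1)]],
      ![[(2,0)], [(2,0), (2,1)]],
      ![[], [(3,1)]],
      ![[(4,0)], [(4,0), (4,1)]],
      ![[(4,0), (5,0)], [(4,0), (4,1), (5,1)]],
      ![[(4,0), (5,0), (6,0)], [(4,0), (4,1), (5,1), (6,1)]]],
    ![
      ![[(2,1), (1,1), (1,0), (0,0)], [(2,1), (1,1), (0,1)]],
      ![[(2,1), (1,1), (1,0)], [(2,1), (1,1)]],
      ![[(2,1), (2,0)], [(2,1)]],
      ![[(3,0)], []],
      ![[(4,1), (4,0)], [(4,1)]],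
      ![[(4,1), (5,1), (5,0)], [(4,1), (5,1)]],
      ![[(4,1), (5,1), (6,1), (6,0)], [(4,1), (5,1), (6,1)]]]],
  ![
    ![
      ![[(5,0), (6,0), (0,0)], [(4,1), (5,1), (6,1), (0,1)]],
      ![[(3,0), (2,0), (1,0)], [(3,0), (2,0), (1,0), (1,1)]],
      ![[(3,0), (2,0)], [(3,0), (2,0), (2,1)]],
      ![[(3,0)], [(4,1), (3,1)]],
      ![[], [(4,1)]],
      ![[(5,0)], [(4,1), (5,1)]],
      ![[(5,0), (6,0)], [(4,1), (5,1), (6,1)]]],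
    ![
      ![[(5,1), (6,1), (0,1), (0,0)], [(5,1), (6,1), (0,1)]],
      ![[(3,1), (2,1), (1,1), (1,0)], [(3,1), (2,1), (1,1)]],
      ![[(3,1), (2,1), (2,0)], [(3,1), (2,1)]],
      ![[(4,0), (3,0)], [(3,1)]],
      ![[(4,0)], []],
      ![[(5,1), (5,0)], [(5,1)]],
      ![[(5,1), (6,1), (6,0)], [(5,1), (6,1)]]]],
  ![
    ![
      ![[(6,0), (0,0)], [(5,1), (6,1), (0,1)]],
      ![[(6,0), (0,0), (1,0)], [(6,0), (0,0), (1,0), (1,1)]],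
      ![[(4,0), (3,0), (2,0)], [(5,1), (4,1), (3,1), (2,1)]],
      ![[(4,0), (3,0)], [(5,1), (4,1), (3,1)]],
      ![[(4,0)], [(5,1), (4,1)]],
      ![[], [(5,1)]],
      ![[(6,0)], [(5,1), (6,1)]]],
    ![
      ![[(5,0), (6,0), (0,0)], [(6,1), (0,1)]],
      ![[(5,0), (6,0), (0,0), (1,0)], [(6,1), (0,1), (1,1)]],
      ![[(4,1), (3,1), (2,1), (2,0)], [(4,1), (3,1), (2,1)]],
      ![[(4,1), (4,0), (3,0)], [(4,1), (3,1)]],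
      ![[(4,1), (4,0)], [(4,1)]],
      ![[(5,0)], []],
      ![[(5,0), (6,0)], [(6,1)]]]],
  ![
    ![
      ![[(0,0)], [(0,0), (0,1)]],
      ![[(0,0), (1,0)], [(0,0), (1,0), (1,1)]],
      ![[(0,0), (1,0), (2,0)], [(0,0), (1,0), (1,1), (2,1)]],
      ![[(5,0), (4,0), (3,0)], [(6,1), (5,1), (4,1), (3,1)]],
      ![[(5,0), (4,0)], [(6,1), (5,1), (4,1)]],
      ![[(5,0)], [(5,0), (5,1)]],
      ![[], [(6,1)]]],
    ![
      ![[(0,1), (0,0)], [(0,1)]],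
      ![[(6,0), (0,0), (1,0)], [(0,1), (1,1)]],
      ![[(6,0), (0,0), (1,0), (2,0)], [(0,1), (1,1), (2,1)]],
      ![[(5,1), (4,1), (4,0), (3,0)], [(5,1), (4,1), (3,1)]],
      ![[(5,1), (4,1), (4,0)], [(5,1), (4,1)]],
      ![[(5,1), (5,0)], [(5,1)]],
      ![[(6,0)], []]]]]

/-- Build a walk from a list of successive vertices (the start point excluded). -/
def mk : (u v : Fin 7 × Fin 2) → List (Fin 7 × Fin 2) →
    Option ((cycleGraph 7 □ cycleGraph 2).Walk u v)
  | u, v, [] => if h : u = v then some (h ▸ Walk.nil) else none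
  | u, v, w :: l =>
    if h : (cycleGraph 7 □ cycleGraph 2).Adj u w then (mk w v l).map (Walk.cons h) else none

def check (u v : Fin 7 × Fin 2) : Bool :=
  match mk u v (tbl u.1 u.2 v.1 v.2) with
  | none => false
  | some p => decide p.support.Nodup && decide ((p.edges.map cfun).Nodup)
      && (p.length == dd u v)

lemma check_all : ∀ u v, check u v = true := by decide

lemma of_check {u v : Fin 7 × Fin 2} (h : check u v = true) :
    ∃ p : (cycleGraph 7 □ cycleGraph 2).Walk u v,
      p.IsPath ∧ p.length = dd u v ∧ (p.edges.map cfun).Nodup := by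
  unfold check at h
  cases hm : mk u v (tbl u.1 u.2 v.1 v.2) with
  | none => rw [hm] at h; simp at h
  | some p =>
    rw [hm] at h
    simp only [Bool.and_eq_true, decide_eq_true_eq, beq_iff_eq] at h
    exact ⟨p, Walk.IsPath.mk' h.1.1, h.2, h.1.2⟩

lemma step : ∀ u w v : Fin 7 × Fin 2,
    (cycleGraph 7 □ cycleGraph 2).Adj u w → dd u v ≤ dd w v + 1 := by decide

lemma dd_self : ∀ u : Fin 7 × Fin 2, dd u u = 0 := by decide

lemma walk_lb : ∀ {u v : Fin 7 × Fin 2} (p : (cycleGraph 7 □ cycleGraph 2).Walk u v),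
    dd u v ≤ p.length := by
  intro u v p
  induction p with
  | nil => exact (dd_self _).le
  | @cons a b c h p ih =>
    calc dd a c ≤ dd b c + 1 := step a b c h
    _ ≤ p.length + 1 := by omega

lemma dist_eq : ∀ u v : Fin 7 × Fin 2, (cycleGraph 7 □ cycleGraph 2).dist u v = dd u v := by
  intro u v
  obtain ⟨p, _, hlen, _⟩ := of_check (check_all u v)
  refine le_antisymm (hlen ▸ SimpleGraph.dist_le p) ?_
  obtain ⟨q, hq⟩ := (SimpleGraph.Walk.reachable p).exists_walk_length_eq_dist
  rw [← hq]; exact walk_lb q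

lemma isSRC : (cycleGraph 7 □ cycleGraph 2).IsStrongRainbowColoring cfun := by
  intro u v _
  obtain ⟨p, hp, hlen, hnd⟩ := of_check (check_all u v)
  exact ⟨p, hp, by rw [hlen, dist_eq], hnd⟩

end Stmt18Aux

theorem stmt_18 : (cycleGraph 7 □ cycleGraph 2).src = 4 := by
  have hmem : 4 ∈ {k : ℕ | ∃ c : Sym2 (Fin 7 × Fin 2) → Fin k,
      (cycleGraph 7 □ cycleGraph 2).IsStrongRainbowColoring c} :=
    ⟨Stmt18Aux.cfun, Stmt18Aux.isSRC⟩
  refine le_antisymm (Nat.sInf_le hmem) (le_csInf ⟨4, hmem⟩ ?_)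
  rintro k ⟨c, hc⟩
  obtain ⟨p, _, hlen, hnd⟩ := hc ((0 : Fin 7), (0 : Fin 2)) ((3 : Fin 7), (1 : Fin 2)) (by decide)
  have h4 : p.length = 4 := by rw [hlen, Stmt18Aux.dist_eq]; rfl
  have := hnd.length_le_card
  simpa [List.length_map, SimpleGraph.Walk.length_edges, h4, Fintype.card_fin] using this
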